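/- Let (k_n) be an increasing sequence of natural numbers with k_1 > 1 whose complement in ℕ is infinite, and define x_j = 2/3^{j−1} if j ∈ {k_n} and x_j = 1/3^{j−1} otherwise. Then the series Σ x_j is fast convergent (x_n > Σ_{j>n} x_j for all n), and the sequence λ_n := r_n/r_{n−1} (where r_n = Σ_{j>n} x_j, r_0 = S) satisfies: λ ∈ (0,1/2)^ℕ, λ_1 > 1/3, λ_j < 1/3 exactly when j ∈ {k_n}, and for every r the identities 3λ_r λ_{r+1} = 4λ_r − 1, 3λ_r λ_{r+1} = 5λ_r − 2, or 6λ_r λ_{r+1} = 7λ_r − 1 hold according to whether (λ_r, λ_{r+1}) lie both on the same side of 1/3, λ_r ≥ 1/3 > λ_{r+1}, or λ_r < 1/3 ≤ λ_{r+1}, respectively. -/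

import Mathlib

open Set Filter

noncomputable section

open scoped Classical

/-- The series terms: `x_j = 2/3^{j-1}` if `j` is one of the `k_n`'s, and `x_j = 1/3^{j-1}`
otherwise (the sequence is `1`-indexed; `k` enumerates the distinguished indices). -/
def xseq (k : ℕ → ℕ) (j : ℕ) : ℝ :=
  (if j ∈ Set.range k then 2 else 1) / 3 ^ (j - 1)

/-- The remainder `r_n = Σ_{j > n} x_j` (so `r_0 = S`, the sum of the series). -/
def rrem (k : ℕ → ℕ) (n : ℕ) : ℝ := ∑' j : ℕ, xseq k (n + 1 + j)

/-- `λ_n = r_n / r_{n-1}`. -/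
def lamOf (k : ℕ → ℕ) (n : ℕ) : ℝ := rrem k n / rrem k (n - 1)

section Aux

variable (k : ℕ → ℕ)

lemma xseq_shift (n j : ℕ) :
    xseq k (n + 1 + j) = (if n + 1 + j ∈ Set.range k then 2 else 1) / 3 ^ (n + j) := by
  simp only [xseq]
  congr 2
  omega

lemma xseq_pos (m : ℕ) : 0 < xseq k m := by
  unfold xseq; split_ifs <;> positivity

lemma xseq_shift_le (n j : ℕ) : xseq k (n + 1 + j) ≤ 2 / 3 ^ (n + j) := by
  rw [xseq_shift]
  gcongr
  split_ifs <;> norm_num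

lemma le_xseq_shift (n j : ℕ) : (1 : ℝ) / 3 ^ (n + j) ≤ xseq k (n + 1 + j) := by
  rw [xseq_shift]
  gcongr
  split_ifs <;> norm_num

lemma tsum_geom_aux (n : ℕ) (c : ℝ) : ∑' j : ℕ, c / 3 ^ (n + j) = (3 * c / 2) / 3 ^ n := by
  have h : ∀ j : ℕ, c / 3 ^ (n + j) = (c / 3 ^ n) * (1 / 3 : ℝ) ^ j := by
    intro j
    rw [pow_add, one_div, inv_pow]
    field_simp
  rw [tsum_congr h, tsum_mul_left, tsum_geometric_of_lt_one (by norm_num) (by norm_num)]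
  have h3 : (0:ℝ) < 3 ^ n := by positivity
  field_simp
  ring

lemma summable_geom_aux (n : ℕ) (c : ℝ) : Summable fun j : ℕ => c / 3 ^ (n + j) := by
  have h : (fun j : ℕ => c / 3 ^ (n + j)) = fun j : ℕ => (c / 3 ^ n) * (1 / 3 : ℝ) ^ j := by
    funext j
    rw [pow_add, one_div, inv_pow]
    field_simp
  rw [h]
  exact (summable_geometric_of_lt_one (by norm_num) (by norm_num)).mul_left _

lemma summable_x (n : ℕ) : Summable fun j : ℕ => xseq k (n + 1 + j) :=
  Summable.of_nonneg_of_le (fun j => (xseq_pos k _).le) (fun j => xseq_shift_le k n j)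
    (summable_geom_aux n 2)

lemma rrem_succ (n : ℕ) : rrem k n = xseq k (n + 1) + rrem k (n + 1) := by
  have h := Summable.tsum_eq_zero_add (summable_x k n)
  have h2 : ∑' j : ℕ, xseq k (n + 1 + (j + 1)) = rrem k (n + 1) := by
    rw [rrem]
    apply tsum_congr
    intro j
    congr 1
    omega
  rw [rrem, h, h2]

lemma rrem_lt_upper (hcompl : {j : ℕ | 1 ≤ j ∧ ∀ n, k n ≠ j}.Infinite) (n : ℕ) :
    rrem k n < 3 / 3 ^ n := by
  obtain ⟨m, hm, hmn⟩ := hcompl.exists_gt n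
  have hm1 : n + 1 + (m - (n + 1)) = m := by omega
  have hstrict : xseq k (n + 1 + (m - (n + 1))) < 2 / 3 ^ (n + (m - (n + 1))) := by
    rw [xseq_shift, hm1, if_neg]
    · rw [div_lt_div_iff₀ (by positivity) (by positivity)]
      nlinarith [pow_pos (show (0:ℝ) < 3 by norm_num) (n + (m - (n+1)))]
    · rintro ⟨i, hi⟩
      exact hm.2 i hi
  have h := Summable.tsum_lt_tsum (f := fun j => xseq k (n + 1 + j)) (g := fun j => 2 / 3 ^ (n + j))
    (fun j => xseq_shift_le k n j) hstrict (summable_x k n) (summable_geom_aux n 2)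
  rw [tsum_geom_aux] at h
  rw [rrem]
  convert h using 2
  · rfl
  norm_num

lemma rrem_gt_lower (hmono : StrictMono k) (n : ℕ) :
    (3 / 2) / 3 ^ n < rrem k n := by
  set m := k (n + 1) with hmdef
  have hmge : n + 1 ≤ m := hmono.le_apply
  have hm1 : n + 1 + (m - (n + 1)) = m := by omega
  have hstrict : (1:ℝ) / 3 ^ (n + (m - (n + 1))) < xseq k (n + 1 + (m - (n + 1))) := by
    rw [xseq_shift, hm1, if_pos ⟨n + 1, rfl⟩]
    rw [div_lt_div_iff₀ (by positivity) (by positivity)]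
    nlinarith [pow_pos (show (0:ℝ) < 3 by norm_num) (n + (m - (n+1)))]
  have h := Summable.tsum_lt_tsum (f := fun j => (1:ℝ) / 3 ^ (n + j)) (g := fun j => xseq k (n + 1 + j))
    (fun j => le_xseq_shift k n j) hstrict (summable_geom_aux n 1) (summable_x k n)
  rw [tsum_geom_aux] at h
  rw [rrem]
  convert h using 2
  · rfl
  norm_num

lemma rrem_pos (hmono : StrictMono k) (n : ℕ) : 0 < rrem k n :=
  lt_trans (by positivity) (rrem_gt_lower k hmono n)

lemma xseq_val (hmono : StrictMono k) (hk1 : 1 < k 0) (n : ℕ) (hn : 1 ≤ n) :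
    (n ∈ Set.range k → xseq k n = 6 / 3 ^ n) ∧
      (n ∉ Set.range k → xseq k n = 3 / 3 ^ n) := by
  have hp : (3:ℝ) ^ n = 3 ^ (n - 1) * 3 := by
    rw [← pow_succ]
    congr 1
    omega
  constructor <;> intro hmem <;> rw [xseq]
  · rw [if_pos hmem, hp, div_eq_div_iff (by positivity) (by positivity)]
    ring
  · rw [if_neg hmem, hp, div_eq_div_iff (by positivity) (by positivity)]
    ring

lemma lam_eq (n : ℕ) : lamOf k n = rrem k n / rrem k (n - 1) := rfl

lemma rrem_pred (n : ℕ) (hn : 1 ≤ n) : rrem k (n - 1) = xseq k n + rrem k n := by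
  have h := rrem_succ k (n - 1)
  have h1 : n - 1 + 1 = n := by omega
  rw [h1] at h
  exact h

/-- Master bounds for λ. -/
lemma lam_master (hmono : StrictMono k) (hk1 : 1 < k 0)
    (hcompl : {j : ℕ | 1 ≤ j ∧ ∀ n, k n ≠ j}.Infinite) (n : ℕ) (hn : 1 ≤ n) :
    0 < lamOf k n ∧ lamOf k n < 1 / 2 ∧
      (n ∈ Set.range k → lamOf k n < 1 / 3) ∧
      (n ∉ Set.range k → 1 / 3 < lamOf k n) := by
  have ha1 := rrem_gt_lower k hmono n
  have ha2 := rrem_lt_upper k hcompl n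
  have hapos := rrem_pos k hmono n
  have hD := rrem_pred k n hn
  have hDpos : 0 < rrem k (n - 1) := rrem_pos k hmono (n - 1)
  have hxv := xseq_val k hmono hk1 n hn
  have hppos : (0:ℝ) < 3 ^ n := by positivity
  have h6 : (6:ℝ) / 3 ^ n = 2 * (3 / 3 ^ n) := by ring
  have h32 : (3:ℝ) / 3 ^ n = 2 * (3 / 2 / 3 ^ n) := by ring
  rw [lam_eq]
  refine ⟨div_pos hapos hDpos, ?_, ?_, ?_⟩
  · rw [div_lt_div_iff₀ hDpos (by norm_num)]
    by_cases hmem : n ∈ Set.range k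
    · have hx := hxv.1 hmem
      rw [hD, hx]
      linarith
    · have hx := hxv.2 hmem
      rw [hD, hx]
      linarith
  · intro hmem
    have hx := hxv.1 hmem
    rw [div_lt_div_iff₀ hDpos (by norm_num), hD, hx]
    linarith
  · intro hmem
    have hx := hxv.2 hmem
    rw [div_lt_div_iff₀ (by norm_num) hDpos, hD, hx]
    linarith

lemma lam_iff (hmono : StrictMono k) (hk1 : 1 < k 0)
    (hcompl : {j : ℕ | 1 ≤ j ∧ ∀ n, k n ≠ j}.Infinite) (n : ℕ) (hn : 1 ≤ n) :
    lamOf k n < 1 / 3 ↔ n ∈ Set.range k := by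
  obtain ⟨-, -, h1, h2⟩ := lam_master k hmono hk1 hcompl n hn
  constructor
  · intro h
    by_contra hmem
    exact absurd h (not_lt.mpr (h2 hmem).le)
  · exact h1

end Aux

theorem fast_convergent_series_lambda (k : ℕ → ℕ)
    (hmono : StrictMono k) (hk1 : 1 < k 0)
    (hcompl : {j : ℕ | 1 ≤ j ∧ ∀ n, k n ≠ j}.Infinite) :
    (∀ n, 1 ≤ n → rrem k n < xseq k n) ∧
    (∀ n, 1 ≤ n → lamOf k n ∈ Ioo (0 : ℝ) (1 / 2)) ∧
    1 / 3 < lamOf k 1 ∧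
    (∀ j, 1 ≤ j → (lamOf k j < 1 / 3 ↔ j ∈ Set.range k)) ∧
    (∀ r, 1 ≤ r →
      (((1 / 3 ≤ lamOf k r ∧ 1 / 3 ≤ lamOf k (r + 1)) ∨
          (lamOf k r < 1 / 3 ∧ lamOf k (r + 1) < 1 / 3)) →
        3 * lamOf k r * lamOf k (r + 1) = 4 * lamOf k r - 1) ∧
      ((1 / 3 ≤ lamOf k r ∧ lamOf k (r + 1) < 1 / 3) →
        3 * lamOf k r * lamOf k (r + 1) = 5 * lamOf k r - 2) ∧
      ((lamOf k r < 1 / 3 ∧ 1 / 3 ≤ lamOf k (r + 1)) →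
        6 * lamOf k r * lamOf k (r + 1) = 7 * lamOf k r - 1)) := by
  have hone : (1 : ℕ) ∉ Set.range k := by
    rintro ⟨i, hi⟩
    have : k 0 ≤ k i := hmono.monotone (Nat.zero_le i)
    omega
  refine ⟨?_, ?_, ?_, ?_, ?_⟩
  · -- fast convergence
    intro n hn
    have hup := rrem_lt_upper k hcompl n
    have hxv := xseq_val k hmono hk1 n hn
    have hppos : (0:ℝ) < 3 ^ n := by positivity
    by_cases hmem : n ∈ Set.range k
    · rw [hxv.1 hmem]
      have : (3:ℝ) / 3 ^ n ≤ 6 / 3 ^ n := by gcongr <;> norm_num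
      linarith
    · rw [hxv.2 hmem]
      exact hup
  · intro n hn
    obtain ⟨h1, h2, -, -⟩ := lam_master k hmono hk1 hcompl n hn
    exact ⟨h1, h2⟩
  · exact (lam_master k hmono hk1 hcompl 1 le_rfl).2.2.2 hone
  · intro j hj
    exact lam_iff k hmono hk1 hcompl j hj
  · intro r hr
    -- setup
    have hr1 : 1 ≤ r + 1 := by omega
    have hiffr := lam_iff k hmono hk1 hcompl r hr
    have hiffr1 := lam_iff k hmono hk1 hcompl (r + 1) hr1
    have hapos := rrem_pos k hmono r
    have hDpos : 0 < rrem k (r - 1) := rrem_pos k hmono (r - 1)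
    have hD := rrem_pred k r hr
    have ha : rrem k r = xseq k (r + 1) + rrem k (r + 1) := rrem_succ k r
    have hxvr := xseq_val k hmono hk1 r hr
    have hxvr1 := xseq_val k hmono hk1 (r + 1) hr1
    have hlamr : lamOf k r = rrem k r / rrem k (r - 1) := rfl
    have hlamr1 : lamOf k (r + 1) = rrem k (r + 1) / rrem k r := by
      rw [lam_eq]
      congr 2
    have hppos : (0:ℝ) < 3 ^ r := by positivity
    have hp1 : (3:ℝ) ^ (r + 1) = 3 ^ r * 3 := by rw [pow_succ]
    have hxr1mem : r + 1 ∈ Set.range k → xseq k (r + 1) = 2 / 3 ^ r := by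
      intro h
      rw [hxvr1.1 h, hp1]
      field_simp
      ring
    have hxr1nmem : r + 1 ∉ Set.range k → xseq k (r + 1) = 1 / 3 ^ r := by
      intro h
      rw [hxvr1.2 h, hp1]
      field_simp
    refine ⟨?_, ?_, ?_⟩
    · rintro (⟨h1, h2⟩ | ⟨h1, h2⟩)
      · -- both ∉ range, c = c' = 1
        have hm1 : r ∉ Set.range k := fun h => absurd (hiffr.mpr h) (not_lt.mpr h1)
        have hm2 : r + 1 ∉ Set.range k := fun h => absurd (hiffr1.mpr h) (not_lt.mpr h2)
        have hx1 := hxvr.2 hm1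
        have hx2 := hxr1nmem hm2
        rw [hlamr, hlamr1]
        have key : 3 * rrem k (r + 1) = 4 * rrem k r - rrem k (r - 1) := by
          rw [hD, ha, hx1, hx2]
          field_simp
          ring
        field_simp
        linear_combination key
      · have hm1 : r ∈ Set.range k := hiffr.mp h1
        have hm2 : r + 1 ∈ Set.range k := hiffr1.mp h2
        have hx1 := hxvr.1 hm1
        have hx2 := hxr1mem hm2
        rw [hlamr, hlamr1]
        have key : 3 * rrem k (r + 1) = 4 * rrem k r - rrem k (r - 1) := by
          rw [hD, ha, hx1, hx2]
          field_simp
          ring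
        field_simp
        linear_combination key
    · rintro ⟨h1, h2⟩
      have hm1 : r ∉ Set.range k := fun h => absurd (hiffr.mpr h) (not_lt.mpr h1)
      have hm2 : r + 1 ∈ Set.range k := hiffr1.mp h2
      have hx1 := hxvr.2 hm1
      have hx2 := hxr1mem hm2
      rw [hlamr, hlamr1]
      have key : 3 * rrem k (r + 1) = 5 * rrem k r - 2 * rrem k (r - 1) := by
        rw [hD, ha, hx1, hx2]
        field_simp
        ring
      field_simp
      linear_combination key
    · rintro ⟨h1, h2⟩
      have hm1 : r ∈ Set.range k := hiffr.mp h1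
      have hm2 : r + 1 ∉ Set.range k := fun h => absurd (hiffr1.mpr h) (not_lt.mpr h2)
      have hx1 := hxvr.1 hm1
      have hx2 := hxr1nmem hm2
      rw [hlamr, hlamr1]
      have key : 6 * rrem k (r + 1) = 7 * rrem k r - rrem k (r - 1) := by
        rw [hD, ha, hx1, hx2]
        field_simp
        ring
      field_simp
      linear_combination key
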